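/- Let ξ be an integer-valued random variable with E|ξ| < ∞, E[exp(γξ)] < ∞ for all γ > 0, whose essential supremum ω = sup{m : P(ξ=m)>0} is finite and satisfies P(ξ = ω) < 1/2. Then lim_{γ→+∞} [L(γ) - γL'(γ)] = ln P(ξ = ω) < ln(1/2), where L(γ) = ln E[exp(γξ)]; consequently the equation L(γ) - γL'(γ) = ln(1/2) has a solution γ* ∈ (0,∞). -/

import Mathlib

open MeasureTheory Filter

private lemma aux_texp (t : ℝ) (ht : 0 ≤ t) : t * Real.exp (-t) ≤ 1 := by
  have h1 : t ≤ Real.exp t := by nlinarith [Real.add_one_le_exp t]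
  have h2 : Real.exp t * Real.exp (-t) = 1 := by
    rw [← Real.exp_add]; simp
  nlinarith [Real.exp_pos (-t)]

private lemma aux_bnd1 {x cc : ℝ} (hx : 0 ≤ x) (hcc : cc ≤ 0) :
    |x * cc * Real.exp (x * cc)| ≤ 1 := by
  have h1 : x * cc ≤ 0 := mul_nonpos_iff.2 (Or.inl ⟨hx, hcc⟩)
  have h2 := aux_texp (-(x * cc)) (by linarith)
  rw [neg_neg] at h2
  have h3 : |x * cc * Real.exp (x * cc)| = -(x * cc) * Real.exp (x * cc) := by
    rw [abs_of_nonpos (mul_nonpos_iff.2 (Or.inr ⟨h1, (Real.exp_pos _).le⟩))]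
    ring
  linarith [h3.le, h3.ge]

private lemma aux_bnd2 {x cc : ℝ} (hx : 0 < x) (hcc : cc ≤ 0) :
    |cc * Real.exp (x * cc)| ≤ 1 / x := by
  have h := aux_bnd1 hx.le hcc
  have : |x * cc * Real.exp (x * cc)| = x * |cc * Real.exp (x * cc)| := by
    rw [mul_assoc, abs_mul, abs_of_pos hx]
  rw [this] at h
  rw [le_div_iff₀ hx]
  linarith

theorem cumulant_equation_solvable {Ω : Type*} [MeasurableSpace Ω]
    (μ : Measure Ω) [IsProbabilityMeasure μ] (ξ : Ω → ℤ) (hmeas : Measurable ξ)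
    (hint : Integrable (fun ω => (ξ ω : ℝ)) μ)
    (hexp : ∀ γ : ℝ, 0 < γ → Integrable (fun ω => Real.exp (γ * (ξ ω : ℝ))) μ)
    (w : ℤ) (hw : 0 < μ {ω | ξ ω = w})
    (hsup : ∀ m : ℤ, 0 < μ {ω | ξ ω = m} → m ≤ w)
    (hhalf : (μ {ω | ξ ω = w}).toReal < 1 / 2)
    (L : ℝ → ℝ) (hL : ∀ γ : ℝ, L γ = Real.log (∫ ω, Real.exp (γ * (ξ ω : ℝ)) ∂μ)) :
    Tendsto (fun γ => L γ - γ * deriv L γ) atTop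
      (nhds (Real.log ((μ {ω | ξ ω = w}).toReal))) ∧
    Real.log ((μ {ω | ξ ω = w}).toReal) < Real.log (1 / 2) ∧
    ∃ γs : ℝ, 0 < γs ∧ L γs - γs * deriv L γs = Real.log (1 / 2) := by
  have hLfun : L = fun γ => Real.log (∫ ω, Real.exp (γ * (ξ ω : ℝ)) ∂μ) := funext hL
  subst hLfun
  set A : Set Ω := {ω | ξ ω = w} with hA
  have hAmeas : MeasurableSet A := hmeas (measurableSet_singleton w)
  set p : ℝ := (μ A).toReal with hpdef
  have hp_pos : 0 < p := ENNReal.toReal_pos hw.ne' (measure_ne_top μ A)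
  -- a.e. bound ξ ≤ w
  have hnull : ∀ m : ℤ, w < m → μ {ω | ξ ω = m} = 0 := by
    intro m hm
    by_contra h
    exact absurd (hsup m (pos_iff_ne_zero.mpr h)) (not_le.mpr hm)
  have hle : ∀ᵐ ω ∂μ, ξ ω ≤ w := by
    rw [ae_iff]
    refine measure_mono_null (fun ω hω => ?_)
      (measure_iUnion_null (s := fun m : {m : ℤ // w < m} => {ω | ξ ω = (m : ℤ)})
        fun m => hnull m m.2)
    simp only [Set.mem_setOf_eq, not_le] at hω
    exact Set.mem_iUnion.2 ⟨⟨ξ ω, hω⟩, rfl⟩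
  -- the centered variable
  set c : Ω → ℝ := fun ω => (ξ ω : ℝ) - (w : ℝ) with hcdef
  have hcm : Measurable c := by
    exact (measurable_from_top (f := fun m : ℤ => (m : ℝ) - (w : ℝ))).comp hmeas
  have hc0 : ∀ᵐ ω ∂μ, c ω ≤ 0 := by
    filter_upwards [hle] with ω hω
    simp only [hcdef, sub_nonpos]
    exact_mod_cast hω
  have hcA : ∀ ω, (ω ∈ A ↔ c ω = 0) := by
    intro ω
    simp only [hA, Set.mem_setOf_eq, hcdef, sub_eq_zero]
    exact_mod_cast Iff.rfl
  -- integrands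
  set f : ℝ → ℝ := fun γ => ∫ ω, Real.exp (γ * c ω) ∂μ with hfdef
  set g2 : ℝ → ℝ := fun γ => ∫ ω, γ * c ω * Real.exp (γ * c ω) ∂μ with hg2def
  have hexpm : ∀ γ : ℝ, AEStronglyMeasurable (fun ω => Real.exp (γ * c ω)) μ :=
    fun γ => ((Real.continuous_exp.comp (continuous_const.mul continuous_id)).measurable.comp
      hcm).aestronglyMeasurable
  have hgm : ∀ γ : ℝ, AEStronglyMeasurable (fun ω => c ω * Real.exp (γ * c ω)) μ :=
    fun γ => (hcm.aestronglyMeasurable.mul (hexpm γ))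
  have hg2m : ∀ γ : ℝ, AEStronglyMeasurable (fun ω => γ * c ω * Real.exp (γ * c ω)) μ := by
    intro γ
    have := (hgm γ).const_mul γ
    simpa [mul_assoc] using this
  have hboundInt : ∀ (h : Ω → ℝ) (C : ℝ), AEStronglyMeasurable h μ →
      (∀ᵐ ω ∂μ, ‖h ω‖ ≤ C) → Integrable h μ := by
    intro h C hm hb
    exact Integrable.mono' (integrable_const C) hm hb
  have hfint : ∀ γ : ℝ, 0 ≤ γ → Integrable (fun ω => Real.exp (γ * c ω)) μ := by
    intro γ hγ
    refine hboundInt _ 1 (hexpm γ) ?_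
    filter_upwards [hc0] with ω hω
    rw [Real.norm_eq_abs, abs_of_pos (Real.exp_pos _)]
    exact Real.exp_le_one_iff.2 (mul_nonpos_iff.2 (Or.inl ⟨hγ, hω⟩))
  have hgint : ∀ γ : ℝ, 0 < γ → Integrable (fun ω => c ω * Real.exp (γ * c ω)) μ := by
    intro γ hγ
    refine hboundInt _ (1 / γ) (hgm γ) ?_
    filter_upwards [hc0] with ω hω
    exact aux_bnd2 hγ hω
  -- the indicator limit function
  have hind : (∫ ω, A.indicator (fun _ => (1 : ℝ)) ω ∂μ) = p := by
    rw [integral_indicator_const (1 : ℝ) hAmeas]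
    simp [hpdef]
    rfl
  have hindInt : Integrable (A.indicator (fun _ => (1 : ℝ))) μ :=
    (integrable_const (1 : ℝ)).indicator hAmeas
  -- p ≤ f γ for γ ≥ 0
  have hf_ge : ∀ γ : ℝ, 0 ≤ γ → p ≤ f γ := by
    intro γ hγ
    rw [← hind]
    refine integral_mono hindInt (hfint γ hγ) (fun ω => ?_)
    by_cases hω : ω ∈ A
    · have : c ω = 0 := (hcA ω).1 hω
      simp [Set.indicator_of_mem hω, this]
    · simp [Set.indicator_of_notMem hω, (Real.exp_pos _).le]
  have hf_pos : ∀ γ : ℝ, 0 ≤ γ → 0 < f γ := fun γ hγ => lt_of_lt_of_le hp_pos (hf_ge γ hγ)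
  -- f tends to p at infinity
  have hf_tendsto : Tendsto f atTop (nhds p) := by
    have hDCT : Tendsto f atTop (nhds (∫ ω, A.indicator (fun _ => (1 : ℝ)) ω ∂μ)) := by
      apply tendsto_integral_filter_of_dominated_convergence (fun _ => (1 : ℝ))
        (Eventually.of_forall fun γ => hexpm γ)
      · filter_upwards [eventually_ge_atTop (0 : ℝ)] with γ hγ
        filter_upwards [hc0] with ω hω
        rw [Real.norm_eq_abs, abs_of_pos (Real.exp_pos _)]
        exact Real.exp_le_one_iff.2 (mul_nonpos_iff.2 (Or.inl ⟨hγ, hω⟩))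
      · exact integrable_const 1
      · filter_upwards [hc0] with ω hω
        rcases eq_or_lt_of_le hω with h0 | hlt
        · have hmem : ω ∈ A := (hcA ω).2 h0
          simp only [Set.indicator_of_mem hmem, h0, mul_zero, Real.exp_zero]
          exact tendsto_const_nhds
        · have hmem : ω ∉ A := fun h => absurd ((hcA ω).1 h) (ne_of_lt hlt)
          simp only [Set.indicator_of_notMem hmem]
          exact Real.tendsto_exp_atBot.comp (tendsto_id.atTop_mul_const_of_neg hlt)
    rwa [hind] at hDCT
  -- γ ⬝ g tends to 0 at infinity
  have hg2_tendsto : Tendsto g2 atTop (nhds 0) := by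
    have hDCT : Tendsto g2 atTop (nhds (∫ _ω, (0 : ℝ) ∂μ)) := by
      apply tendsto_integral_filter_of_dominated_convergence (fun _ => (1 : ℝ))
        (Eventually.of_forall fun γ => hg2m γ)
      · filter_upwards [eventually_ge_atTop (0 : ℝ)] with γ hγ
        filter_upwards [hc0] with ω hω
        rw [Real.norm_eq_abs]
        exact aux_bnd1 hγ hω
      · exact integrable_const 1
      · filter_upwards [hc0] with ω hω
        rcases eq_or_lt_of_le hω with h0' | hlt
        · simp only [h0', mul_zero, zero_mul]
          exact tendsto_const_nhds
        · have h1 : Tendsto (fun γ : ℝ => γ * (-c ω)) atTop atTop :=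
            tendsto_id.atTop_mul_const (by linarith)
          have h2 := (Real.tendsto_pow_mul_exp_neg_atTop_nhds_zero 1).comp h1
          have h3 := h2.neg
          simp only [neg_zero] at h3
          refine h3.congr fun γ => ?_
          simp only [Function.comp_apply, pow_one]
          have harg : -(γ * -c ω) = γ * c ω := by ring
          rw [← harg]
          ring
    simpa using hDCT
  -- f tends to 1 as γ → 0+
  have hf0 : Tendsto f (nhdsWithin 0 (Set.Ioi 0)) (nhds 1) := by
    have hDCT : Tendsto f (nhdsWithin 0 (Set.Ioi 0)) (nhds (∫ _ω, (1 : ℝ) ∂μ)) := by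
      apply tendsto_integral_filter_of_dominated_convergence (fun _ => (1 : ℝ))
        (Eventually.of_forall fun γ => hexpm γ)
      · filter_upwards [self_mem_nhdsWithin] with γ hγ
        filter_upwards [hc0] with ω hω
        rw [Real.norm_eq_abs, abs_of_pos (Real.exp_pos _)]
        exact Real.exp_le_one_iff.2 (mul_nonpos_iff.2 (Or.inl ⟨(Set.mem_Ioi.1 hγ).le, hω⟩))
      · exact integrable_const 1
      · refine Eventually.of_forall fun ω => ?_
        have hT : Tendsto (fun γ : ℝ => Real.exp (γ * c ω)) (nhds 0) (nhds 1) := by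
          have hcexp : Continuous fun γ : ℝ => Real.exp (γ * c ω) :=
            Real.continuous_exp.comp (continuous_id.mul continuous_const)
          simpa using hcexp.tendsto (0 : ℝ)
        exact hT.mono_left nhdsWithin_le_nhds
    simpa using hDCT
  -- g2 tends to 0 as γ → 0+
  have hcont_int : ∀ ω, Continuous (fun γ : ℝ => γ * c ω * Real.exp (γ * c ω)) :=
    fun ω => (continuous_id.mul continuous_const).mul
      (Real.continuous_exp.comp (continuous_id.mul continuous_const))
  have hg20 : Tendsto g2 (nhdsWithin 0 (Set.Ioi 0)) (nhds 0) := by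
    have hDCT : Tendsto g2 (nhdsWithin 0 (Set.Ioi 0)) (nhds (∫ _ω, (0 : ℝ) ∂μ)) := by
      apply tendsto_integral_filter_of_dominated_convergence (fun _ => (1 : ℝ))
        (Eventually.of_forall fun γ => hg2m γ)
      · filter_upwards [self_mem_nhdsWithin] with γ hγ
        filter_upwards [hc0] with ω hω
        rw [Real.norm_eq_abs]
        exact aux_bnd1 (Set.mem_Ioi.1 hγ).le hω
      · exact integrable_const 1
      · refine Eventually.of_forall fun ω => ?_
        have hT : Tendsto (fun γ : ℝ => γ * c ω * Real.exp (γ * c ω)) (nhds 0) (nhds 0) := by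
          have := (hcont_int ω).tendsto (0 : ℝ)
          simpa using this
        exact hT.mono_left nhdsWithin_le_nhds
    simpa using hDCT
  -- continuity of f and g2 on positive reals
  have hf_cont : ∀ γ0 : ℝ, 0 < γ0 → ContinuousAt f γ0 := by
    intro γ0 hγ0
    apply continuousAt_of_dominated (Eventually.of_forall fun γ => hexpm γ) _ (integrable_const 1)
    · refine Eventually.of_forall fun ω => ?_
      exact (Real.continuous_exp.comp (continuous_id.mul continuous_const)).continuousAt
    · filter_upwards [IsOpen.mem_nhds isOpen_Ioi (Set.mem_Ioi.2 hγ0)] with γ hγ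
      filter_upwards [hc0] with ω hω
      rw [Real.norm_eq_abs, abs_of_pos (Real.exp_pos _)]
      exact Real.exp_le_one_iff.2 (mul_nonpos_iff.2 (Or.inl ⟨(Set.mem_Ioi.1 hγ).le, hω⟩))
  have hg2_cont : ∀ γ0 : ℝ, 0 < γ0 → ContinuousAt g2 γ0 := by
    intro γ0 hγ0
    apply continuousAt_of_dominated (Eventually.of_forall fun γ => hg2m γ) _ (integrable_const 1)
    · refine Eventually.of_forall fun ω => ?_
      exact (hcont_int ω).continuousAt
    · filter_upwards [IsOpen.mem_nhds isOpen_Ioi (Set.mem_Ioi.2 hγ0)] with γ hγ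
      filter_upwards [hc0] with ω hω
      rw [Real.norm_eq_abs]
      exact aux_bnd1 (Set.mem_Ioi.1 hγ).le hω
  -- relation between M and f
  have hM : ∀ γ : ℝ, (∫ ω, Real.exp (γ * (ξ ω : ℝ)) ∂μ) = Real.exp (γ * w) * f γ := by
    intro γ
    rw [hfdef, ← integral_const_mul]
    congr 1
    funext ω
    rw [← Real.exp_add]
    congr 1
    simp only [hcdef]
    ring
  -- derivative of M
  have hderivM : ∀ γ0 : ℝ, 0 < γ0 → HasDerivAt (fun γ => ∫ ω, Real.exp (γ * (ξ ω : ℝ)) ∂μ)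
      (∫ ω, (ξ ω : ℝ) * Real.exp (γ0 * (ξ ω : ℝ)) ∂μ) γ0 := by
    intro γ0 hγ0
    have hfm : ∀ γ : ℝ, AEStronglyMeasurable (fun ω => Real.exp (γ * (ξ ω : ℝ))) μ := by
      intro γ
      have : (fun ω => Real.exp (γ * (ξ ω : ℝ))) =
          (fun m : ℤ => Real.exp (γ * (m : ℝ))) ∘ ξ := rfl
      rw [this]
      exact (measurable_from_top.comp hmeas).aestronglyMeasurable
    have hfm' : AEStronglyMeasurable (fun ω => (ξ ω : ℝ) * Real.exp (γ0 * (ξ ω : ℝ))) μ := by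
      have : (fun ω => (ξ ω : ℝ) * Real.exp (γ0 * (ξ ω : ℝ))) =
          (fun m : ℤ => (m : ℝ) * Real.exp (γ0 * (m : ℝ))) ∘ ξ := rfl
      rw [this]
      exact (measurable_from_top.comp hmeas).aestronglyMeasurable
    have key := hasDerivAt_integral_of_dominated_loc_of_deriv_le (μ := μ)
      (F := fun γ ω => Real.exp (γ * (ξ ω : ℝ)))
      (F' := fun γ ω => (ξ ω : ℝ) * Real.exp (γ * (ξ ω : ℝ)))
      (x₀ := γ0)
      (bound := fun _ => (2 / γ0 + |(w : ℝ)|) * Real.exp ((3 * γ0 / 2) * |(w : ℝ)|))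
      (Metric.ball_mem_nhds γ0 (half_pos hγ0))
      (Eventually.of_forall fun γ => hfm γ) (hexp γ0 hγ0) hfm' ?_ (integrable_const _) ?_
    · exact key.2
    · -- the bound
      filter_upwards [hc0] with ω hω
      intro x hx
      rw [Metric.mem_ball, Real.dist_eq, abs_lt] at hx
      have hx1 : γ0 / 2 < x := by linarith
      have hx2 : x < 3 * γ0 / 2 := by linarith
      have hxpos : 0 < x := lt_trans (half_pos hγ0) hx1
      have hsplit : (ξ ω : ℝ) = c ω + (w : ℝ) := by simp [hcdef]
      have hexpsplit : Real.exp (x * (ξ ω : ℝ)) =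
          Real.exp (x * c ω) * Real.exp (x * (w : ℝ)) := by
        rw [← Real.exp_add]; congr 1; rw [hsplit]; ring
      rw [Real.norm_eq_abs, hexpsplit, hsplit]
      have h1 : |c ω * Real.exp (x * c ω)| ≤ 1 / x := aux_bnd2 hxpos hω
      have h1' : |c ω * Real.exp (x * c ω)| ≤ 2 / γ0 := by
        refine h1.trans ?_
        rw [div_le_div_iff₀ hxpos hγ0]
        linarith
      have h2 : Real.exp (x * c ω) ≤ 1 :=
        Real.exp_le_one_iff.2 (mul_nonpos_iff.2 (Or.inl ⟨hxpos.le, hω⟩))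
      have h3 : Real.exp (x * (w : ℝ)) ≤ Real.exp ((3 * γ0 / 2) * |(w : ℝ)|) := by
        apply Real.exp_le_exp.2
        calc x * (w : ℝ) ≤ |x * (w : ℝ)| := le_abs_self _
          _ = x * |(w : ℝ)| := by rw [abs_mul, abs_of_pos hxpos]
          _ ≤ (3 * γ0 / 2) * |(w : ℝ)| := by
              apply mul_le_mul_of_nonneg_right hx2.le (abs_nonneg _)
      have hEpos : (0:ℝ) < Real.exp (x * (w : ℝ)) := Real.exp_pos _
      calc |(c ω + (w : ℝ)) * (Real.exp (x * c ω) * Real.exp (x * (w : ℝ)))|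
          = |(c ω + (w : ℝ)) * Real.exp (x * c ω)| * Real.exp (x * (w : ℝ)) := by
            rw [show (c ω + (w : ℝ)) * (Real.exp (x * c ω) * Real.exp (x * (w : ℝ))) =
              ((c ω + (w : ℝ)) * Real.exp (x * c ω)) * Real.exp (x * (w : ℝ)) from by ring,
              abs_mul, abs_of_pos hEpos]
        _ ≤ (2 / γ0 + |(w : ℝ)|) * Real.exp (x * (w : ℝ)) := by
            apply mul_le_mul_of_nonneg_right _ hEpos.le
            calc |(c ω + (w : ℝ)) * Real.exp (x * c ω)|
                ≤ |c ω * Real.exp (x * c ω)| + |(w : ℝ) * Real.exp (x * c ω)| := by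
                  rw [add_mul]; exact abs_add_le _ _
              _ ≤ 2 / γ0 + |(w : ℝ)| := by
                  refine add_le_add h1' ?_
                  rw [abs_mul, abs_of_pos (Real.exp_pos _)]
                  nlinarith [abs_nonneg (w : ℝ)]
        _ ≤ (2 / γ0 + |(w : ℝ)|) * Real.exp ((3 * γ0 / 2) * |(w : ℝ)|) := by
            apply mul_le_mul_of_nonneg_left h3
            positivity
    · -- the differentiability
      refine Eventually.of_forall fun ω => ?_
      intro x _
      have h1 : HasDerivAt (fun γ : ℝ => γ * (ξ ω : ℝ)) ((ξ ω : ℝ)) x :=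
        hasDerivAt_mul_const _
      have h2 := h1.exp
      exact h2.congr_deriv (mul_comm _ _)
  -- derivative of L and the key identity
  have hkey : ∀ γ : ℝ, 0 < γ →
      (fun γ => Real.log (∫ ω, Real.exp (γ * (ξ ω : ℝ)) ∂μ)) γ -
        γ * deriv (fun γ => Real.log (∫ ω, Real.exp (γ * (ξ ω : ℝ)) ∂μ)) γ =
      Real.log (f γ) - g2 γ / f γ := by
    intro γ hγ
    show Real.log (∫ ω, Real.exp (γ * (ξ ω : ℝ)) ∂μ) -
      γ * deriv (fun γ => Real.log (∫ ω, Real.exp (γ * (ξ ω : ℝ)) ∂μ)) γ =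
      Real.log (f γ) - g2 γ / f γ
    have hMpos : 0 < ∫ ω, Real.exp (γ * (ξ ω : ℝ)) ∂μ := by
      rw [hM γ]
      exact mul_pos (Real.exp_pos _) (hf_pos γ hγ.le)
    have hDL : HasDerivAt (fun γ => Real.log (∫ ω, Real.exp (γ * (ξ ω : ℝ)) ∂μ))
        ((∫ ω, (ξ ω : ℝ) * Real.exp (γ * (ξ ω : ℝ)) ∂μ) / (∫ ω, Real.exp (γ * (ξ ω : ℝ)) ∂μ))
        γ := (hderivM γ hγ).log hMpos.ne'
    rw [hDL.deriv]
    -- decompose the numerator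
    have hnum : (∫ ω, (ξ ω : ℝ) * Real.exp (γ * (ξ ω : ℝ)) ∂μ) =
        Real.exp (γ * w) * ((∫ ω, c ω * Real.exp (γ * c ω) ∂μ) + (w : ℝ) * f γ) := by
      have hpt : ∀ ω, (ξ ω : ℝ) * Real.exp (γ * (ξ ω : ℝ)) =
          Real.exp (γ * w) * (c ω * Real.exp (γ * c ω) + (w : ℝ) * Real.exp (γ * c ω)) := by
        intro ω
        have hsplit : (ξ ω : ℝ) = c ω + (w : ℝ) := by simp [hcdef]
        have hexpsplit : Real.exp (γ * (ξ ω : ℝ)) =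
            Real.exp (γ * c ω) * Real.exp (γ * (w : ℝ)) := by
          rw [← Real.exp_add]; congr 1; rw [hsplit]; ring
        rw [hexpsplit, hsplit]; ring
      simp_rw [hpt]
      rw [integral_const_mul]
      congr 1
      rw [integral_add (hgint γ hγ) ((hfint γ hγ.le).const_mul _), integral_const_mul]
    have hg2eq : g2 γ = γ * ∫ ω, c ω * Real.exp (γ * c ω) ∂μ := by
      show (∫ ω, γ * c ω * Real.exp (γ * c ω) ∂μ) = γ * ∫ ω, c ω * Real.exp (γ * c ω) ∂μ
      rw [← integral_const_mul]
      refine integral_congr_ae (Eventually.of_forall fun ω => ?_)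
      show γ * c ω * Real.exp (γ * c ω) = γ * (c ω * Real.exp (γ * c ω))
      ring
    rw [hM γ, hnum, Real.log_mul (Real.exp_pos _).ne' (hf_pos γ hγ.le).ne', Real.log_exp]
    have hfne : f γ ≠ 0 := (hf_pos γ hγ.le).ne'
    have hexpne : Real.exp (γ * (w : ℝ)) ≠ 0 := (Real.exp_pos _).ne'
    field_simp [hg2eq]
    rw [hg2eq]; ring
  -- the limit of the explicit expression
  set ψ : ℝ → ℝ := fun γ => Real.log (f γ) - g2 γ / f γ with hψdef
  have hψ_tendsto : Tendsto ψ atTop (nhds (Real.log p)) := by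
    have h1 : Tendsto (fun γ => Real.log (f γ)) atTop (nhds (Real.log p)) :=
      ((Real.continuousAt_log hp_pos.ne').tendsto).comp hf_tendsto
    have h2 : Tendsto (fun γ => g2 γ / f γ) atTop (nhds (0 / p)) :=
      hg2_tendsto.div hf_tendsto hp_pos.ne'
    rw [zero_div] at h2
    simpa using h1.sub h2
  have hψ0 : Tendsto ψ (nhdsWithin 0 (Set.Ioi 0)) (nhds 0) := by
    have h1 : Tendsto (fun γ => Real.log (f γ)) (nhdsWithin 0 (Set.Ioi 0))
        (nhds (Real.log 1)) := ((Real.continuousAt_log one_ne_zero).tendsto).comp hf0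
    have h2 : Tendsto (fun γ => g2 γ / f γ) (nhdsWithin 0 (Set.Ioi 0)) (nhds (0 / 1)) :=
      hg20.div hf0 one_ne_zero
    rw [zero_div] at h2
    rw [Real.log_one] at h1
    simpa using h1.sub h2
  have heq_ae : ∀ᶠ γ in atTop, (fun γ => Real.log (∫ ω, Real.exp (γ * (ξ ω : ℝ)) ∂μ)) γ -
      γ * deriv (fun γ => Real.log (∫ ω, Real.exp (γ * (ξ ω : ℝ)) ∂μ)) γ = ψ γ := by
    filter_upwards [eventually_gt_atTop (0 : ℝ)] with γ hγ
    exact hkey γ hγ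
  have hgoal1 : Tendsto (fun γ => (fun γ => Real.log (∫ ω, Real.exp (γ * (ξ ω : ℝ)) ∂μ)) γ -
      γ * deriv (fun γ => Real.log (∫ ω, Real.exp (γ * (ξ ω : ℝ)) ∂μ)) γ) atTop
      (nhds (Real.log p)) := hψ_tendsto.congr' (heq_ae.mono fun γ h => h.symm)
  have hlogs : Real.log p < Real.log (1 / 2) := Real.log_lt_log hp_pos hhalf
  refine ⟨hgoal1, hlogs, ?_⟩
  -- existence of the solution via IVT
  have hlog_half_neg : Real.log (1 / 2) < 0 := Real.log_neg (by norm_num) (by norm_num)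
  obtain ⟨a, ha_pos, ha⟩ : ∃ a : ℝ, 0 < a ∧ Real.log (1 / 2) < ψ a := by
    have hev : ∀ᶠ γ in nhdsWithin 0 (Set.Ioi 0), Real.log (1 / 2) < ψ γ :=
      hψ0.eventually (eventually_gt_nhds hlog_half_neg)
    obtain ⟨a, ha1, ha2⟩ := (hev.and self_mem_nhdsWithin).exists
    exact ⟨a, Set.mem_Ioi.1 ha2, ha1⟩
  obtain ⟨b, hab, hb⟩ : ∃ b : ℝ, a ≤ b ∧ ψ b < Real.log (1 / 2) := by
    have hev : ∀ᶠ γ in atTop, ψ γ < Real.log (1 / 2) :=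
      hψ_tendsto.eventually (eventually_lt_nhds hlogs)
    obtain ⟨b, hb1, hb2⟩ := (hev.and (eventually_ge_atTop a)).exists
    exact ⟨b, hb2, hb1⟩
  have hψ_contOn : ContinuousOn ψ (Set.Icc a b) := by
    intro γ hγ
    have hγpos : 0 < γ := lt_of_lt_of_le ha_pos hγ.1
    apply ContinuousAt.continuousWithinAt
    have h1 : ContinuousAt (fun γ => Real.log (f γ)) γ :=
      (Real.continuousAt_log (hf_pos γ hγpos.le).ne').comp (hf_cont γ hγpos)
    have h2 : ContinuousAt (fun γ => g2 γ / f γ) γ :=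
      (hg2_cont γ hγpos).div (hf_cont γ hγpos) (hf_pos γ hγpos.le).ne'
    exact h1.sub h2
  have hmem : Real.log (1 / 2) ∈ Set.Icc (ψ b) (ψ a) := ⟨hb.le, ha.le⟩
  obtain ⟨γs, hγs_mem, hγs_eq⟩ := intermediate_value_Icc' hab hψ_contOn hmem
  refine ⟨γs, lt_of_lt_of_le ha_pos hγs_mem.1, ?_⟩
  rw [hkey γs (lt_of_lt_of_le ha_pos hγs_mem.1)]
  exact hγs_eq
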